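/- Let n ≥ 2 and let σ ≤ τ in P_n^* be wire diagrams with S(σ) = S(τ). Then the map D ↦ π(D) is an order isomorphism from the closed interval [σ, τ] in P_n^* onto the closed interval [π(σ), π(τ)] in the Bruhat order on the symmetric group S_n. -/

import Mathlib

open Equiv Finset

/-- A candidate wire diagram: a permutation of the `2 n` endpoint positions. -/
abbrev WDperm (n : ℕ) := Equiv.Perm (Fin (2 * n))

/-- `σ` is a wire diagram on `n` wires: a fixed-point-free involution of the `2 n` positions. -/
def IsWD {n : ℕ} (σ : WDperm n) : Prop := (∀ x, σ (σ x) = x) ∧ ∀ x, σ x ≠ x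

instance IsWD.decPred {n : ℕ} : DecidablePred (@IsWD n) := fun σ => by
  unfold IsWD; infer_instance

/-- Positions `a < c` are first endpoints of a pair of crossing wires `{a, σ a}`, `{c, σ c}`,
i.e. `a < c < σ a < σ c`. -/
def IsCrossing {n : ℕ} (σ : WDperm n) (a c : Fin (2 * n)) : Prop :=
  a < c ∧ c < σ a ∧ σ a < σ c

instance IsCrossing.dec {n : ℕ} (σ : WDperm n) (a c : Fin (2 * n)) :
    Decidable (IsCrossing σ a c) := by unfold IsCrossing; infer_instance

/-- The number `c(σ)` of crossings of `σ`. -/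
def ncross {n : ℕ} (σ : WDperm n) : ℕ :=
  (Finset.univ.filter (fun p : Fin (2 * n) × Fin (2 * n) => IsCrossing σ p.1 p.2)).card

/-- The nesting uncrossing of the crossing `{a, σ a}, {c, σ c}` (with `a < c < σ a < σ c`):
replace the pairs `{a,b},{c,d}` by `{a,d},{b,c}` where `b = σ a`, `d = σ c`. -/
def nestU {n : ℕ} (σ : WDperm n) (a c : Fin (2 * n)) : WDperm n :=
  Equiv.swap (σ a) (σ c) * σ * Equiv.swap (σ a) (σ c)

/-- The disjoint uncrossing: replace the pairs `{a,b},{c,d}` by `{a,c},{b,d}`. -/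
def disjU {n : ℕ} (σ : WDperm n) (a c : Fin (2 * n)) : WDperm n :=
  Equiv.swap (σ a) c * σ * Equiv.swap (σ a) c

/-- `τ` is obtained from `σ` by a nesting uncrossing of some crossing of `σ`. -/
def IsNestStep {n : ℕ} (σ τ : WDperm n) : Prop := ∃ a c, IsCrossing σ a c ∧ τ = nestU σ a c

/-- `τ` is obtained from `σ` by a disjoint uncrossing of some crossing of `σ`. -/
def IsDisjStep {n : ℕ} (σ τ : WDperm n) : Prop := ∃ a c, IsCrossing σ a c ∧ τ = disjU σ a c

/-- `τ` is obtained from `σ` by an uncrossing step that decreases the crossing number by one. -/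
def UncCov {n : ℕ} (σ τ : WDperm n) : Prop :=
  (IsNestStep σ τ ∨ IsDisjStep σ τ) ∧ ncross τ + 1 = ncross σ

/-- The dual uncrossing poset `P_n^*`: wire diagrams together with a top element `none = 1̂`
(the adjoined element `0̂` of `P_n`). -/
abbrev PStar (n : ℕ) := Option {σ : WDperm n // IsWD σ}

/-- The covering relation of `P_n^*`. -/
def Cov {n : ℕ} : PStar n → PStar n → Prop
  | some σ, some τ => UncCov σ.1 τ.1
  | some σ, none => ncross σ.1 = 0
  | none, _ => False

/-- The partial order of `P_n^*`: reflexive-transitive closure of the covering relation. -/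
def ple {n : ℕ} : PStar n → PStar n → Prop := Relation.ReflTransGen Cov

/-- The (0-indexed) name `w(σ)(x)` of the wire through position `x`: the number of wires whose
first endpoint is strictly smaller than the first endpoint of the wire through `x`. -/
def word {n : ℕ} (σ : WDperm n) (x : Fin (2 * n)) : ℕ :=
  (Finset.univ.filter (fun a : Fin (2 * n) => a < σ a ∧ a < min x (σ x))).card

/-- The start set `S(σ)`: the set of first endpoints of wires of `σ`. -/
def startSet {n : ℕ} (σ : WDperm n) : Finset (Fin (2 * n)) :=
  Finset.univ.filter (fun a => a < σ a)

/-- The noncrossing pair set `N(σ)` (on 0-indexed wire names): `(i, j)` with `i < j` for each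
nested pair of wires `i < j`, and `(j, i)` for each disjoint pair of wires `i < j`. -/
def NPairs {n : ℕ} (σ : WDperm n) : Set (ℕ × ℕ) :=
  {p | ∃ a c : Fin (2 * n), a < σ a ∧ c < σ c ∧ a < c ∧
        ((σ c < σ a ∧ p = (word σ a, word σ c)) ∨ (σ a < c ∧ p = (word σ c, word σ a)))}

/-- Lexicographic comparison of finsets via their increasing enumerations. -/
def finsetLexLE {m : ℕ} (A B : Finset (Fin m)) : Prop :=
  A = B ∨ List.Lex (· < ·) (A.sort (· ≤ ·)) (B.sort (· ≤ ·))

/-- Labels of the edge labeling: ordered pairs of (0-indexed) wire names, and a label `L`. -/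
inductive Lbl where
  | pair : ℕ → ℕ → Lbl
  | L : Lbl
deriving DecidableEq

/-- The total order `<λ` on labels. -/
def lblLT : Lbl → Lbl → Prop
  | .pair i j, .pair i' j' =>
      if i < j then (if i' < j' then i < i' ∨ (i = i' ∧ j < j') else True)
      else (if i' < j' then False else (j' < j ∨ (j = j' ∧ i' < i)))
  | .pair i j, .L => i < j
  | .L, .pair r s => s < r
  | .L, .L => False

/-- `≤λ` on labels. -/
def lblLE (p q : Lbl) : Prop := p = q ∨ lblLT p q

/-- The sorted list of positions where `σ` and `τ` differ. -/
def diffList {n : ℕ} (σ τ : WDperm n) : List (Fin (2 * n)) :=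
  (Finset.univ.filter (fun x => σ x ≠ τ x)).sort (· ≤ ·)

/-- The edge labeling `λ` of `P_n^*`: an uncrossing of the crossing formed by wires `k < m`
of the lower diagram gets label `(k, m)` if it is the nesting uncrossing and `(m, k)` if it is
the disjoint uncrossing; covers of the top element `1̂ = none` get the label `L`. -/
def lbl {n : ℕ} : PStar n → PStar n → Lbl
  | some σ, some τ =>
      match (diffList σ.1 τ.1)[0]?, (diffList σ.1 τ.1)[1]? with
      | some a, some c =>
          if τ.1 a = σ.1 c then Lbl.pair (word σ.1 a) (word σ.1 c)
          else Lbl.pair (word σ.1 c) (word σ.1 a)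
      | _, _ => Lbl.L
  | _, _ => Lbl.L

/-- `c` is a saturated chain from `u` to `v` in `P_n^*`. -/
def SatChain {n : ℕ} (c : List (PStar n)) (u v : PStar n) : Prop :=
  c.Chain' Cov ∧ c.head? = some u ∧ c.getLast? = some v

/-- The label sequence of a saturated chain. -/
def chainLabels {n : ℕ} (c : List (PStar n)) : List Lbl := c.zipWith lbl c.tail

/-- Lexicographic order on pairs of labels. -/
def pairLexLT (p q : Lbl × Lbl) : Prop := lblLT p.1 q.1 ∨ (p.1 = q.1 ∧ lblLT p.2 q.2)

/-- `x ⋖ y ⋖ z` is a topological ascent: its label pair is lexicographically strictly smaller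
than the label pair of every other saturated chain from `x` to `z`. -/
def TopAscent {n : ℕ} (x y z : PStar n) : Prop :=
  Cov x y ∧ Cov y z ∧ ∀ y' : PStar n, Cov x y' → Cov y' z → y' ≠ y →
    pairLexLT (lbl x y, lbl y z) (lbl x y', lbl y' z)

/-- `x ⋖ y ⋖ z` is a topological descent: a length-two chain that is not a topological ascent. -/
def TopDescent {n : ℕ} (x y z : PStar n) : Prop := Cov x y ∧ Cov y z ∧ ¬ TopAscent x y z

/-- Every length-two subchain of `c` is a topological ascent. -/
def AllTopAscents {n : ℕ} (c : List (PStar n)) : Prop :=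
  ∀ x y z : PStar n, [x, y, z] <:+: c → TopAscent x y z

/-- The number of inversions of a permutation. -/
def numInv {n : ℕ} (π : Equiv.Perm (Fin n)) : ℕ :=
  (Finset.univ.filter (fun p : Fin n × Fin n => p.1 < p.2 ∧ π p.2 < π p.1)).card

/-- One step of the Bruhat order: left multiplication by a transposition raising `inv` by one. -/
def BruhatStep {n : ℕ} (u v : Equiv.Perm (Fin n)) : Prop :=
  (∃ a b : Fin n, a ≠ b ∧ v = Equiv.swap a b * u) ∧ numInv v = numInv u + 1

/-- The Bruhat order on `S_n`. -/
def BruhatLE {n : ℕ} : Equiv.Perm (Fin n) → Equiv.Perm (Fin n) → Prop :=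
  Relation.ReflTransGen BruhatStep

/-- The set of second endpoints of wires of `σ`. -/
def secondEnds {n : ℕ} (σ : WDperm n) : Finset (Fin (2 * n)) :=
  Finset.univ.filter (fun b => σ b < b)

/-- The wire name at the `t`-th (0-indexed) second endpoint. -/
def piVal {n : ℕ} (σ : WDperm n) (t : ℕ) : ℕ :=
  (((secondEnds σ).sort (· ≤ ·))[t]?).elim 0 (word σ)

open Classical in
/-- The permutation `π(σ) ∈ S_n` reading the wire names at the second endpoints of `σ` in
increasing order of position. -/
noncomputable def piPerm {n : ℕ} (σ : WDperm n) : Equiv.Perm (Fin n) :=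
  if h : Function.Bijective (fun t : Fin n =>
      if ht : piVal σ (t : ℕ) < n then (⟨piVal σ (t : ℕ), ht⟩ : Fin n) else t)
  then Equiv.ofBijective _ h else 1

/-- Apply to the crossing at `(a, c)` the nesting (`nest = true`) or disjoint (`nest = false`)
uncrossing. -/
def uncrossAt {n : ℕ} (σ : WDperm n) (a c : Fin (2 * n)) (nest : Bool) : WDperm n :=
  if nest then nestU σ a c else disjU σ a c

namespace UX
open Finset

variable {n : ℕ}

lemma wd_invol {D : WDperm n} (hD : IsWD D) (x : Fin (2*n)) : D (D x) = x := hD.1 x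

lemma mem_startSet {D : WDperm n} {x : Fin (2*n)} : x ∈ startSet D ↔ x < D x := by
  simp [startSet]

lemma mem_secondEnds {D : WDperm n} {x : Fin (2*n)} : x ∈ secondEnds D ↔ D x < x := by
  simp [secondEnds]

lemma notMem_startSet {D : WDperm n} (hD : IsWD D) {x : Fin (2*n)} :
    x ∉ startSet D ↔ D x < x := by
  rw [mem_startSet, not_lt]
  exact ⟨fun h => lt_of_le_of_ne h (hD.2 x), le_of_lt⟩

lemma secondEnds_eq_compl {D : WDperm n} (hD : IsWD D) : secondEnds D = (startSet D)ᶜ := by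
  ext x; rw [Finset.mem_compl, mem_secondEnds, ← notMem_startSet hD]

lemma image_startSet {D : WDperm n} (hD : IsWD D) :
    (startSet D).image (⇑D) = secondEnds D := by
  ext y
  simp only [Finset.mem_image, mem_startSet, mem_secondEnds]
  constructor
  · rintro ⟨x, hx, rfl⟩; rwa [wd_invol hD]
  · intro hy; exact ⟨D y, by rwa [wd_invol hD], wd_invol hD y⟩

lemma card_startSet {D : WDperm n} (hD : IsWD D) : (startSet D).card = n := by
  have h1 : (startSet D).card + (startSet D)ᶜ.card = 2*n := by
    rw [Finset.card_add_card_compl]; simp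
  have h2 : (secondEnds D).card = (startSet D).card := by
    rw [← image_startSet hD, Finset.card_image_of_injective _ D.injective]
  rw [secondEnds_eq_compl hD] at h2
  omega

lemma card_secondEnds {D : WDperm n} (hD : IsWD D) : (secondEnds D).card = n := by
  rw [← image_startSet hD, Finset.card_image_of_injective _ D.injective, card_startSet hD]

/-- The rank of `m` in `S`. -/
def rank (S : Finset (Fin (2*n))) (m : Fin (2*n)) : ℕ := (S.filter (· < m)).card

lemma word_eq_rank (D : WDperm n) (x : Fin (2*n)) :
    word D x = rank (startSet D) (min x (D x)) := by
  simp [word, rank, startSet, Finset.filter_filter]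

lemma rank_lt_card {S : Finset (Fin (2*n))} {m : Fin (2*n)} (hm : m ∈ S) :
    rank S m < S.card :=
  Finset.card_lt_card (Finset.filter_ssubset.mpr ⟨m, hm, by simp⟩)

lemma rank_lt_rank {S : Finset (Fin (2*n))} {a b : Fin (2*n)} (ha : a ∈ S) (hab : a < b) :
    rank S a < rank S b := by
  apply Finset.card_lt_card
  have hsub : S.filter (· < a) ⊆ S.filter (· < b) := fun x hx => by
    simp only [Finset.mem_filter] at *
    exact ⟨hx.1, lt_trans hx.2 hab⟩
  rw [Finset.ssubset_iff_of_subset hsub]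
  exact ⟨a, Finset.mem_filter.mpr ⟨ha, hab⟩, by simp⟩

lemma rank_lt_rank_iff {S : Finset (Fin (2*n))} {a b : Fin (2*n)} (ha : a ∈ S) (hb : b ∈ S) :
    rank S a < rank S b ↔ a < b := by
  constructor
  · intro h
    rcases lt_trichotomy a b with h' | rfl | h'
    · exact h'
    · omega
    · exact absurd (rank_lt_rank hb h') (by omega)
  · exact rank_lt_rank ha

lemma rank_inj {S : Finset (Fin (2*n))} {a b : Fin (2*n)} (ha : a ∈ S) (hb : b ∈ S)
    (h : rank S a = rank S b) : a = b := by
  rcases lt_trichotomy a b with h' | h' | h'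
  · exact absurd (rank_lt_rank ha h') (by omega)
  · exact h'
  · exact absurd (rank_lt_rank hb h') (by omega)

/-- The `t`-th smallest element of an `n`-element subset of `Fin (2*n)`. -/
def enum (S : Finset (Fin (2*n))) (h : S.card = n) (t : Fin n) : Fin (2*n) :=
  (S.sort (· ≤ ·)).get ⟨t, by rw [Finset.length_sort, h]; exact t.isLt⟩

lemma enum_mem (S : Finset (Fin (2*n))) (h : S.card = n) (t : Fin n) : enum S h t ∈ S := by
  rw [← Finset.mem_sort (· ≤ ·)]; exact List.get_mem _ _

lemma enum_lt_enum {S : Finset (Fin (2*n))} {h : S.card = n} {t s : Fin n} :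
    enum S h t < enum S h s ↔ t < s := by
  constructor
  · intro hlt
    by_contra hc
    push_neg at hc
    rcases eq_or_lt_of_le hc with rfl | hc'
    · exact lt_irrefl _ hlt
    · exact absurd ((S.sortedLT_sort.pairwise).rel_get_of_lt
        (show (⟨(s:ℕ), _⟩ : Fin _) < ⟨(t:ℕ), _⟩ from hc')) (lt_asymm hlt)
  · intro hlt
    exact (S.sortedLT_sort.pairwise).rel_get_of_lt hlt

lemma enum_inj {S : Finset (Fin (2*n))} {h : S.card = n} {t s : Fin n}
    (he : enum S h t = enum S h s) : t = s := by
  rcases lt_trichotomy t s with h' | h' | h'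
  · exact absurd he (ne_of_lt (enum_lt_enum.mpr h'))
  · exact h'
  · exact absurd he (ne_of_gt (enum_lt_enum.mpr h'))

lemma rank_enum (S : Finset (Fin (2*n))) (h : S.card = n) (t : Fin n) :
    rank S (enum S h t) = t := by
  have himg : S.filter (· < enum S h t) = (Finset.Iio t).image (enum S h) := by
    ext y
    simp only [Finset.mem_filter, Finset.mem_image, Finset.mem_Iio]
    constructor
    · rintro ⟨hyS, hlt⟩
      obtain ⟨j, hj⟩ := List.get_of_mem ((Finset.mem_sort (· ≤ ·)).mpr hyS)
      have hjn : (j : ℕ) < n :=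
        lt_of_lt_of_eq j.isLt (by rw [Finset.length_sort, h])
      refine ⟨⟨j, hjn⟩, ?_, ?_⟩
      · by_contra hc
        push_neg at hc
        have : enum S h t ≤ enum S h ⟨j, hjn⟩ := by
          rcases eq_or_lt_of_le hc with heq | hlt'
          · rw [heq]
          · exact le_of_lt (enum_lt_enum.mpr hlt')
        have hy : enum S h ⟨j, hjn⟩ = y := by
          rw [← hj]; rfl
        rw [hy] at this; omega
      · rw [← hj]; rfl
    · rintro ⟨j, hjt, rfl⟩
      exact ⟨enum_mem S h j, enum_lt_enum.mpr hjt⟩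
  rw [rank, himg, Finset.card_image_of_injective _ (fun a b => enum_inj), Fin.card_Iio]

lemma enum_rank {S : Finset (Fin (2*n))} (h : S.card = n) {x : Fin (2*n)} (hx : x ∈ S) :
    enum S h ⟨rank S x, by have := rank_lt_card hx; omega⟩ = x := by
  apply rank_inj (enum_mem S h _) hx
  rw [rank_enum]

end UX
namespace UX
open Finset

variable {n : ℕ}

/-- The `t`-th second endpoint. -/
def bE (D : WDperm n) (hD : IsWD D) (t : Fin n) : Fin (2*n) :=
  enum (secondEnds D) (card_secondEnds hD) t

lemma bE_mem (D : WDperm n) (hD : IsWD D) (t : Fin n) : D (bE D hD t) < bE D hD t :=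
  mem_secondEnds.mp (enum_mem _ _ t)

lemma D_bE_mem_start (D : WDperm n) (hD : IsWD D) (t : Fin n) :
    D (bE D hD t) ∈ startSet D := by
  rw [mem_startSet, wd_invol hD]
  exact bE_mem D hD t

lemma word_bE (D : WDperm n) (hD : IsWD D) (t : Fin n) :
    word D (bE D hD t) = rank (startSet D) (D (bE D hD t)) := by
  rw [word_eq_rank, min_eq_right (le_of_lt (bE_mem D hD t))]

lemma piVal_eq (D : WDperm n) (hD : IsWD D) (t : Fin n) :
    piVal D t = word D (bE D hD t) := by
  have hl : (t : ℕ) < ((secondEnds D).sort (· ≤ ·)).length := by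
    rw [Finset.length_sort, card_secondEnds hD]; exact t.isLt
  rw [piVal, List.getElem?_eq_getElem hl]
  rfl

lemma piVal_lt (D : WDperm n) (hD : IsWD D) (t : Fin n) : piVal D (t : ℕ) < n := by
  rw [piVal_eq D hD t, word_bE D hD t]
  have := rank_lt_card (D_bE_mem_start D hD t)
  rw [card_startSet hD] at this
  exact this

lemma pi_bij (D : WDperm n) (hD : IsWD D) : Function.Bijective (fun t : Fin n =>
    if ht : piVal D (t : ℕ) < n then (⟨piVal D (t : ℕ), ht⟩ : Fin n) else t) := by
  rw [Fintype.bijective_iff_injective_and_card]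
  refine ⟨fun t s hts => ?_, rfl⟩
  dsimp only at hts
  rw [dif_pos (piVal_lt D hD t), dif_pos (piVal_lt D hD s)] at hts
  have h1 : piVal D (t : ℕ) = piVal D (s : ℕ) := congrArg Fin.val hts
  rw [piVal_eq D hD t, piVal_eq D hD s, word_bE D hD t, word_bE D hD s] at h1
  have h2 := rank_inj (D_bE_mem_start D hD t) (D_bE_mem_start D hD s) h1
  exact enum_inj (D.injective h2)

lemma piPerm_apply_val (D : WDperm n) (hD : IsWD D) (t : Fin n) :
    ((piPerm D) t : ℕ) = word D (bE D hD t) := by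
  rw [piPerm, dif_pos (pi_bij D hD)]
  have hofb : (Equiv.ofBijective _ (pi_bij D hD)) t
      = if ht : piVal D (t : ℕ) < n then (⟨piVal D (t : ℕ), ht⟩ : Fin n) else t := rfl
  rw [hofb, dif_pos (piVal_lt D hD t)]
  exact piVal_eq D hD t

lemma enum_piPerm (D : WDperm n) (hD : IsWD D) (t : Fin n) :
    enum (startSet D) (card_startSet hD) (piPerm D t) = D (bE D hD t) := by
  apply rank_inj (enum_mem _ _ _) (D_bE_mem_start D hD t)
  rw [rank_enum, piPerm_apply_val D hD t, word_bE D hD t]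

end UX
namespace UX
open Finset Equiv

variable {n : ℕ}

lemma isWD_conj {D : WDperm n} (hD : IsWD D) (u v : Fin (2*n)) :
    IsWD (Equiv.swap u v * D * Equiv.swap u v) := by
  constructor
  · intro x
    simp [Equiv.Perm.mul_apply, hD.1, Equiv.swap_apply_self]
  · intro x h
    simp only [Equiv.Perm.mul_apply] at h
    apply hD.2 (Equiv.swap u v x)
    have h2 := congrArg (Equiv.swap u v) h
    rwa [Equiv.swap_apply_self] at h2

section nest

variable {D : WDperm n} {a c : Fin (2*n)}

lemma isWD_nestU (hD : IsWD D) : IsWD (nestU D a c) := isWD_conj hD _ _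

lemma nestU_apply_a (hX : IsCrossing D a c) : nestU D a c a = D c := by
  obtain ⟨h1, h2, h3⟩ := hX
  have hab : a ≠ D a := ne_of_lt (lt_trans h1 h2)
  have had : a ≠ D c := ne_of_lt (lt_trans (lt_trans h1 h2) h3)
  simp [nestU, Equiv.Perm.mul_apply, Equiv.swap_apply_of_ne_of_ne hab had]

lemma nestU_apply_c (hX : IsCrossing D a c) : nestU D a c c = D a := by
  obtain ⟨h1, h2, h3⟩ := hX
  have hcb : c ≠ D a := ne_of_lt h2
  have hcd : c ≠ D c := ne_of_lt (lt_trans h2 h3)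
  simp [nestU, Equiv.Perm.mul_apply, Equiv.swap_apply_of_ne_of_ne hcb hcd]

lemma nestU_apply_b (hD : IsWD D) (hX : IsCrossing D a c) : nestU D a c (D a) = c := by
  obtain ⟨h1, h2, h3⟩ := hX
  have hcb : c ≠ D a := ne_of_lt h2
  have hcd : c ≠ D c := ne_of_lt (lt_trans h2 h3)
  simp [nestU, Equiv.Perm.mul_apply, hD.1,
    Equiv.swap_apply_of_ne_of_ne hcb hcd]

lemma nestU_apply_d (hD : IsWD D) (hX : IsCrossing D a c) : nestU D a c (D c) = a := by
  obtain ⟨h1, h2, h3⟩ := hX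
  have hab : a ≠ D a := ne_of_lt (lt_trans h1 h2)
  have had : a ≠ D c := ne_of_lt (lt_trans (lt_trans h1 h2) h3)
  simp [nestU, Equiv.Perm.mul_apply, hD.1,
    Equiv.swap_apply_of_ne_of_ne hab had]

lemma nestU_apply_other {x : Fin (2*n)} (hxa : x ≠ a) (hxc : x ≠ c)
    (hxb : x ≠ D a) (hxd : x ≠ D c) : nestU D a c x = D x := by
  have h1 : D x ≠ D a := fun h => hxa (D.injective h)
  have h2 : D x ≠ D c := fun h => hxc (D.injective h)
  simp [nestU, Equiv.Perm.mul_apply, Equiv.swap_apply_of_ne_of_ne hxb hxd,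
    Equiv.swap_apply_of_ne_of_ne h1 h2]

lemma second_ne_of_start {x : Fin (2*n)} (hD : IsWD D) (hx : x < D x) {y : Fin (2*n)}
    (hy : D y < y) : x ≠ y := by
  rintro rfl; exact absurd hx (asymm hy)

lemma startSet_nestU (hD : IsWD D) (hX : IsCrossing D a c) :
    startSet (nestU D a c) = startSet D := by
  obtain ⟨h1, h2, h3⟩ := hX
  have hac : a < c := h1
  have hcb : c < D a := h2
  have hbd : D a < D c := h3
  have hDb : D (D a) = a := hD.1 a
  have hDd : D (D c) = c := hD.1 c
  ext x
  rw [mem_startSet, mem_startSet]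
  by_cases hxa : x = a
  · subst hxa
    rw [nestU_apply_a ⟨h1, h2, h3⟩]
    exact iff_of_true (lt_trans (lt_trans hac hcb) hbd) (lt_trans hac hcb)
  by_cases hxc : x = c
  · subst hxc
    rw [nestU_apply_c ⟨h1, h2, h3⟩]
    exact iff_of_true hcb (lt_trans hcb hbd)
  by_cases hxb : x = D a
  · subst hxb
    rw [nestU_apply_b hD ⟨h1, h2, h3⟩]
    constructor
    · intro h; exact absurd h (asymm hcb)
    · intro h; rw [hDb] at h; exact absurd h (asymm (lt_trans hac hcb))
  by_cases hxd : x = D c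
  · subst hxd
    rw [nestU_apply_d hD ⟨h1, h2, h3⟩]
    constructor
    · intro h; exact absurd h (asymm (lt_trans (lt_trans hac hcb) hbd))
    · intro h; rw [hDd] at h; exact absurd h (asymm (lt_trans hcb hbd))
  · rw [nestU_apply_other hxa hxc hxb hxd]

lemma nestU_swap_end (hD : IsWD D) (hX : IsCrossing D a c) {x : Fin (2*n)} (hx : x < D x) :
    nestU D a c (Equiv.swap a c x) = D x := by
  by_cases hxa : x = a
  · subst hxa
    rw [Equiv.swap_apply_left, nestU_apply_c hX]
  by_cases hxc : x = c
  · subst hxc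
    rw [Equiv.swap_apply_right, nestU_apply_a hX]
  · rw [Equiv.swap_apply_of_ne_of_ne hxa hxc]
    have hxb : x ≠ D a := by
      rintro rfl; rw [hD.1] at hx; exact absurd hx (asymm (lt_trans hX.1 hX.2.1))
    have hxd : x ≠ D c := by
      rintro rfl; rw [hD.1] at hx
      exact absurd hx (asymm (lt_trans hX.2.1 hX.2.2))
    exact nestU_apply_other hxa hxc hxb hxd

lemma nestU_swap_end' (hD : IsWD D) (hX : IsCrossing D a c) {x : Fin (2*n)}
    (hx : x < nestU D a c x) : D (Equiv.swap a c x) = nestU D a c x := by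
  have hmem : x ∈ startSet (nestU D a c) := mem_startSet.mpr hx
  rw [startSet_nestU hD hX, mem_startSet] at hmem
  have := nestU_swap_end hD hX (x := Equiv.swap a c x) ?_
  · rw [Equiv.swap_apply_self] at this
    exact this.symm
  · by_cases hxa : x = a
    · subst hxa; rw [Equiv.swap_apply_left]; exact lt_trans hX.2.1 hX.2.2
    by_cases hxc : x = c
    · subst hxc; rw [Equiv.swap_apply_right]; exact lt_trans hX.1 hX.2.1
    · rw [Equiv.swap_apply_of_ne_of_ne hxa hxc]; exact hmem

end nest
end UX
namespace UX
open Finset Equiv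

variable {n : ℕ}

/-- Ordered pairs of first endpoints. -/
def Pset (D : WDperm n) : Finset (Fin (2*n) × Fin (2*n)) :=
  univ.filter (fun p => p.1 < D p.1 ∧ p.2 < D p.2 ∧ p.1 < p.2)

/-- Crossing pairs. -/
def Xset (D : WDperm n) : Finset (Fin (2*n) × Fin (2*n)) :=
  univ.filter (fun p : Fin (2*n) × Fin (2*n) => IsCrossing D p.1 p.2)

/-- Nested pairs. -/
def Nset (D : WDperm n) : Finset (Fin (2*n) × Fin (2*n)) :=
  univ.filter (fun p => p.1 < D p.1 ∧ p.2 < D p.2 ∧ p.1 < p.2 ∧ D p.2 < D p.1)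

/-- Disjoint pairs. -/
def Dset (D : WDperm n) : Finset (Fin (2*n) × Fin (2*n)) :=
  univ.filter (fun p => p.1 < D p.1 ∧ p.2 < D p.2 ∧ D p.1 < p.2)

lemma ncross_eq_card_Xset (D : WDperm n) : ncross D = (Xset D).card := rfl

lemma Pset_card_split (D : WDperm n) (hD : IsWD D) :
    (Pset D).card = (Xset D).card + (Nset D).card + (Dset D).card := by
  classical
  have e1 : Dset D = (Pset D).filter (fun p => D p.1 < p.2) := by
    ext p
    simp only [Dset, Pset, mem_filter, mem_univ, true_and]
    constructor
    · rintro ⟨h1, h2, h3⟩; exact ⟨⟨h1, h2, lt_trans h1 h3⟩, h3⟩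
    · rintro ⟨⟨h1, h2, _⟩, h4⟩; exact ⟨h1, h2, h4⟩
  have e2 : Nset D = ((Pset D).filter (fun p => ¬ D p.1 < p.2)).filter
      (fun p => D p.2 < D p.1) := by
    ext p
    simp only [Nset, Pset, mem_filter, mem_univ, true_and]
    constructor
    · rintro ⟨h1, h2, h3, h4⟩
      exact ⟨⟨⟨h1, h2, h3⟩, fun h => absurd (lt_trans h h2) (asymm h4)⟩, h4⟩
    · rintro ⟨⟨⟨h1, h2, h3⟩, _⟩, h4⟩; exact ⟨h1, h2, h3, h4⟩
  have e3 : Xset D = ((Pset D).filter (fun p => ¬ D p.1 < p.2)).filter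
      (fun p => ¬ D p.2 < D p.1) := by
    ext p
    simp only [Xset, Pset, mem_filter, mem_univ, true_and]
    simp only [IsCrossing]
    constructor
    · rintro ⟨h1, h2, h3⟩
      have hp1 : p.1 < D p.1 := lt_trans h1 h2
      have hp2 : p.2 < D p.2 := lt_trans h2 h3
      exact ⟨⟨⟨hp1, hp2, h1⟩, fun h => absurd h (asymm h2)⟩, fun h => absurd h (asymm h3)⟩
    · rintro ⟨⟨⟨h1, h2, h3⟩, h4⟩, h5⟩
      refine ⟨h3, ?_, ?_⟩
      · rcases lt_or_eq_of_le (not_lt.mp h4) with h | h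
        · exact h
        · exfalso
          have hd : D p.2 = p.1 := by rw [h, hD.1]
          rw [hd] at h2
          exact absurd h2 (asymm h3)
      · rcases lt_or_eq_of_le (not_lt.mp h5) with h | h
        · exact h
        · exact absurd (D.injective h) (ne_of_lt h3)
  have s1 := Finset.card_filter_add_card_filter_not
    (s := Pset D) (p := fun p => D p.1 < p.2)
  have s2 := Finset.card_filter_add_card_filter_not
    (s := (Pset D).filter (fun p => ¬ D p.1 < p.2)) (p := fun p => D p.2 < D p.1)
  rw [← e1] at s1
  rw [← e2] at s2
  have e3' : (Xset D).card =
      (((Pset D).filter (fun p => ¬ D p.1 < p.2)).filter (fun p => ¬ D p.2 < D p.1)).card := by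
    rw [e3]
  omega

lemma Pset_eq_of_startSet {D D' : WDperm n} (h : startSet D = startSet D') :
    Pset D = Pset D' := by
  ext p
  have h1 : p.1 < D p.1 ↔ p.1 < D' p.1 := by
    rw [← mem_startSet, ← mem_startSet, h]
  have h2 : p.2 < D p.2 ↔ p.2 < D' p.2 := by
    rw [← mem_startSet, ← mem_startSet, h]
  simp only [Pset, mem_filter, mem_univ, true_and]
  rw [h1, h2]

section nest

variable {D : WDperm n} {a c : Fin (2*n)}

lemma mem_Dset {D : WDperm n} {p : Fin (2*n) × Fin (2*n)} :
    p ∈ Dset D ↔ p.1 < D p.1 ∧ p.2 < D p.2 ∧ D p.1 < p.2 := by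
  simp [Dset]

lemma Dset_card_nestU (hD : IsWD D) (hX : IsCrossing D a c) :
    (Dset (nestU D a c)).card = (Dset D).card := by
  have hss := startSet_nestU hD hX
  refine Finset.card_bij' (fun p _ => ((Equiv.swap a c p.1 : Fin (2*n)), p.2))
    (fun p _ => ((Equiv.swap a c p.1 : Fin (2*n)), p.2)) ?_ ?_ ?_ ?_
  · -- maps Dset (nestU) to Dset D
    intro p hp
    rw [mem_Dset] at hp ⊢
    obtain ⟨h1, h2, h3⟩ := hp
    have he := nestU_swap_end' hD hX h1
    have hmem1 : Equiv.swap a c p.1 ∈ startSet D := by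
      have : p.1 ∈ startSet D := by rw [← hss]; exact mem_startSet.mpr h1
      by_cases hpa : p.1 = a
      · rw [hpa, Equiv.swap_apply_left, mem_startSet]
        exact lt_trans hX.2.1 hX.2.2
      by_cases hpc : p.1 = c
      · rw [hpc, Equiv.swap_apply_right, mem_startSet]
        exact lt_trans hX.1 hX.2.1
      · rwa [Equiv.swap_apply_of_ne_of_ne hpa hpc]
    refine ⟨mem_startSet.mp hmem1, ?_, ?_⟩
    · have : p.2 ∈ startSet D := by rw [← hss]; exact mem_startSet.mpr h2
      exact mem_startSet.mp this
    · rw [he]; exact h3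
  · -- maps Dset D to Dset (nestU)
    intro p hp
    rw [mem_Dset] at hp ⊢
    obtain ⟨h1, h2, h3⟩ := hp
    have he := nestU_swap_end hD hX h1
    have hmem1 : Equiv.swap a c p.1 ∈ startSet (nestU D a c) := by
      rw [hss]
      by_cases hpa : p.1 = a
      · rw [hpa, Equiv.swap_apply_left, mem_startSet]
        exact lt_trans hX.2.1 hX.2.2
      by_cases hpc : p.1 = c
      · rw [hpc, Equiv.swap_apply_right, mem_startSet]
        exact lt_trans hX.1 hX.2.1
      · rw [Equiv.swap_apply_of_ne_of_ne hpa hpc]; exact mem_startSet.mpr h1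
    refine ⟨mem_startSet.mp hmem1, ?_, ?_⟩
    · have : p.2 ∈ startSet (nestU D a c) := by rw [hss]; exact mem_startSet.mpr h2
      exact mem_startSet.mp this
    · rw [he]; exact h3
  · intro p hp
    simp [Equiv.swap_apply_self]
  · intro p hp
    simp [Equiv.swap_apply_self]

end nest
end UX
namespace UX
open Finset Equiv

variable {n : ℕ}

lemma mem_Nset {D : WDperm n} {p : Fin (2*n) × Fin (2*n)} :
    p ∈ Nset D ↔ p.1 < D p.1 ∧ p.2 < D p.2 ∧ p.1 < p.2 ∧ D p.2 < D p.1 := by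
  simp [Nset]

lemma enum_eq_of_eq {S S' : Finset (Fin (2*n))} (hSS : S = S') {h : S.card = n}
    {h' : S'.card = n} (t : Fin n) : enum S h t = enum S' h' t := by
  subst hSS; rfl

lemma secondEnds_eq_of_startSet {D D' : WDperm n} (hD : IsWD D) (hD' : IsWD D')
    (h : startSet D = startSet D') : secondEnds D = secondEnds D' := by
  rw [secondEnds_eq_compl hD, secondEnds_eq_compl hD', h]

lemma bE_eq_of_startSet {D D' : WDperm n} (hD : IsWD D) (hD' : IsWD D')
    (h : startSet D = startSet D') (t : Fin n) : bE D hD t = bE D' hD' t :=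
  enum_eq_of_eq (secondEnds_eq_of_startSet hD hD' h) t

lemma npos (z : Fin (2*n)) : 0 < n := by
  have := z.isLt; omega

/-- Index of a second endpoint among second endpoints. -/
def sIdxT (D : WDperm n) (z : Fin (2*n)) : Fin n :=
  ⟨rank (secondEnds D) z % n, Nat.mod_lt _ (npos z)⟩

lemma sIdxT_val {D : WDperm n} (hD : IsWD D) {z : Fin (2*n)} (hz : z ∈ secondEnds D) :
    (sIdxT D z : ℕ) = rank (secondEnds D) z := by
  have h1 : rank (secondEnds D) z < n := by
    have := rank_lt_card hz; rwa [card_secondEnds hD] at this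
  show rank (secondEnds D) z % n = _
  exact Nat.mod_eq_of_lt h1

lemma bE_sIdxT {D : WDperm n} (hD : IsWD D) {z : Fin (2*n)} (hz : z ∈ secondEnds D) :
    bE D hD (sIdxT D z) = z := by
  have h1 : rank (secondEnds D) z < n := by
    have := rank_lt_card hz; rwa [card_secondEnds hD] at this
  have h2 : sIdxT D z = ⟨rank (secondEnds D) z, h1⟩ :=
    Fin.ext (by simpa [sIdxT] using Nat.mod_eq_of_lt h1)
  rw [bE, h2]
  have h3 := enum_rank (S := secondEnds D) (card_secondEnds hD) hz
  convert h3 using 2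

lemma bE_mem_secondEnds {D : WDperm n} (hD : IsWD D) (t : Fin n) :
    bE D hD t ∈ secondEnds D := mem_secondEnds.mpr (bE_mem D hD t)

lemma sIdxT_bE {D : WDperm n} (hD : IsWD D) (t : Fin n) : sIdxT D (bE D hD t) = t := by
  apply Fin.ext
  rw [sIdxT_val hD (bE_mem_secondEnds hD t)]
  exact rank_enum _ _ t

lemma D_mem_secondEnds {D : WDperm n} (hD : IsWD D) {x : Fin (2*n)}
    (hx : x < D x) : D x ∈ secondEnds D := by
  rw [mem_secondEnds, hD.1]; exact hx

lemma numInv_piPerm (D : WDperm n) (hD : IsWD D) : numInv (piPerm D) = (Nset D).card := by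
  unfold numInv
  refine Finset.card_bij' (fun p _ => ((D (bE D hD p.2) : Fin (2*n)), D (bE D hD p.1)))
    (fun p _ => ((sIdxT D (D p.2) : Fin n), sIdxT D (D p.1))) ?_ ?_ ?_ ?_
  · rintro ⟨t, s⟩ hp
    simp only [mem_filter, mem_univ, true_and] at hp
    obtain ⟨hts, hinv⟩ := hp
    rw [mem_Nset]
    have hbt := bE_mem D hD t
    have hbs := bE_mem D hD s
    have hxs : D (bE D hD s) ∈ startSet D := D_bE_mem_start D hD s
    have hxt : D (bE D hD t) ∈ startSet D := D_bE_mem_start D hD t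
    have hrank : rank (startSet D) (D (bE D hD s)) < rank (startSet D) (D (bE D hD t)) := by
      have h1 := piPerm_apply_val D hD s
      have h2 := piPerm_apply_val D hD t
      rw [word_bE D hD s] at h1
      rw [word_bE D hD t] at h2
      have := hinv
      rw [Fin.lt_def] at this
      omega
    refine ⟨?_, ?_, ?_, ?_⟩
    · simp only
      rw [hD.1]; exact hbs
    · simp only
      rw [hD.1]; exact hbt
    · exact (rank_lt_rank_iff hxs hxt).mp hrank
    · simp only
      rw [hD.1, hD.1]
      exact enum_lt_enum.mpr hts
  · rintro ⟨x, y⟩ hp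
    rw [mem_Nset] at hp
    obtain ⟨h1, h2, h3, h4⟩ := hp
    simp only [mem_filter, mem_univ, true_and]
    have hmx : D x ∈ secondEnds D := D_mem_secondEnds hD h1
    have hmy : D y ∈ secondEnds D := D_mem_secondEnds hD h2
    constructor
    · rw [Fin.lt_def, sIdxT_val hD hmy, sIdxT_val hD hmx]
      exact rank_lt_rank hmy h4
    · rw [Fin.lt_def, piPerm_apply_val D hD, piPerm_apply_val D hD,
        word_bE D hD, word_bE D hD, bE_sIdxT hD hmx, bE_sIdxT hD hmy, hD.1, hD.1]
      exact rank_lt_rank (mem_startSet.mpr h1) h3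
  · rintro ⟨t, s⟩ hp
    simp only
    rw [hD.1, hD.1, sIdxT_bE hD, sIdxT_bE hD]
  · rintro ⟨x, y⟩ hp
    rw [mem_Nset] at hp
    obtain ⟨h1, h2, h3, h4⟩ := hp
    simp only
    rw [bE_sIdxT hD (D_mem_secondEnds hD h1),
      bE_sIdxT hD (D_mem_secondEnds hD h2), hD.1, hD.1]

end UX
namespace UX
open Finset Equiv

variable {n : ℕ}

section conj

variable {D : WDperm n} {a c : Fin (2*n)}

lemma a_mem_start (hX : IsCrossing D a c) : a ∈ startSet D :=
  mem_startSet.mpr (lt_trans hX.1 hX.2.1)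

lemma c_mem_start (hX : IsCrossing D a c) : c ∈ startSet D :=
  mem_startSet.mpr (lt_trans hX.2.1 hX.2.2)

lemma rank_a_lt (hD : IsWD D) (hX : IsCrossing D a c) : rank (startSet D) a < n := by
  have := rank_lt_card (a_mem_start hX); rwa [card_startSet hD] at this

lemma rank_c_lt (hD : IsWD D) (hX : IsCrossing D a c) : rank (startSet D) c < n := by
  have := rank_lt_card (c_mem_start hX); rwa [card_startSet hD] at this

lemma piPerm_nestU (hD : IsWD D) (hX : IsCrossing D a c) :
    piPerm (nestU D a c) =
      Equiv.swap (⟨rank (startSet D) a, rank_a_lt hD hX⟩ : Fin n)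
        ⟨rank (startSet D) c, rank_c_lt hD hX⟩ * piPerm D := by
  set τ := nestU D a c with hτdef
  have hτ : IsWD τ := isWD_nestU hD
  have hss : startSet τ = startSet D := startSet_nestU hD hX
  set kF : Fin n := ⟨rank (startSet D) a, rank_a_lt hD hX⟩ with hkF
  set mF : Fin n := ⟨rank (startSet D) c, rank_c_lt hD hX⟩ with hmF
  have hkm : kF ≠ mF := by
    intro h
    have := rank_inj (a_mem_start hX) (c_mem_start hX) (congrArg Fin.val h)
    exact absurd this (ne_of_lt hX.1)
  apply Equiv.ext
  intro t
  apply Fin.ext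
  have hβ : bE τ hτ t = bE D hD t := bE_eq_of_startSet hτ hD hss t
  have hLHS : ((piPerm τ t : Fin n) : ℕ) = rank (startSet D) (τ (bE D hD t)) := by
    rw [piPerm_apply_val τ hτ t, word_bE τ hτ t, hβ, hss]
  have hRHS : ((piPerm D t : Fin n) : ℕ) = rank (startSet D) (D (bE D hD t)) := by
    rw [piPerm_apply_val D hD t, word_bE D hD t]
  rw [Equiv.Perm.mul_apply, hLHS]
  by_cases hb : bE D hD t = D a
  · have hπ : piPerm D t = kF := by
      apply Fin.ext
      rw [hRHS, hb, hD.1]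
    rw [hπ, Equiv.swap_apply_left, hb, nestU_apply_b hD hX]
  by_cases hd : bE D hD t = D c
  · have hπ : piPerm D t = mF := by
      apply Fin.ext
      rw [hRHS, hd, hD.1]
    rw [hπ, Equiv.swap_apply_right, hd, nestU_apply_d hD hX]
  · have hmem := bE_mem_secondEnds hD t
    have hne_a : bE D hD t ≠ a := by
      rintro h
      rw [h, mem_secondEnds] at hmem
      exact absurd (lt_trans hX.1 hX.2.1) (asymm hmem)
    have hne_c : bE D hD t ≠ c := by
      rintro h
      rw [h, mem_secondEnds] at hmem
      exact absurd (lt_trans hX.2.1 hX.2.2) (asymm hmem)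
    have hτval : τ (bE D hD t) = D (bE D hD t) := nestU_apply_other hne_a hne_c hb hd
    have hπk : piPerm D t ≠ kF := by
      intro h
      have h2 := congrArg Fin.val h
      rw [hRHS] at h2
      have := rank_inj (D_bE_mem_start D hD t) (a_mem_start hX) h2
      exact hb (by rw [← this, hD.1])
    have hπm : piPerm D t ≠ mF := by
      intro h
      have h2 := congrArg Fin.val h
      rw [hRHS] at h2
      have := rank_inj (D_bE_mem_start D hD t) (c_mem_start hX) h2
      exact hd (by rw [← this, hD.1])
    rw [Equiv.swap_apply_of_ne_of_ne hπk hπm, hτval, ← hRHS]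

lemma numInv_add_ncross_nestU (hD : IsWD D) (hX : IsCrossing D a c) :
    numInv (piPerm (nestU D a c)) + ncross (nestU D a c) = numInv (piPerm D) + ncross D := by
  have hτ : IsWD (nestU D a c) := isWD_nestU hD
  have hss : startSet (nestU D a c) = startSet D := startSet_nestU hD hX
  have h1 := Pset_card_split D hD
  have h2 := Pset_card_split (nestU D a c) hτ
  have h3 : Pset (nestU D a c) = Pset D := Pset_eq_of_startSet hss
  have h4 := Dset_card_nestU hD hX
  rw [numInv_piPerm _ hτ, numInv_piPerm _ hD, ncross_eq_card_Xset, ncross_eq_card_Xset]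
  rw [h3] at h2
  omega

end conj
end UX
namespace UX
open Finset Equiv

variable {n : ℕ}

/-- The set of inversions. -/
def invSet (w : Equiv.Perm (Fin n)) : Finset (Fin n × Fin n) :=
  univ.filter (fun p => p.1 < p.2 ∧ w p.2 < w p.1)

lemma numInv_eq_card_invSet (w : Equiv.Perm (Fin n)) : numInv w = (invSet w).card := rfl

lemma numInv_swap_ge {w : Equiv.Perm (Fin n)} {t s : Fin n} (hts : t < s) (h : w t < w s) :
    numInv w + 1 ≤ numInv (Equiv.swap (w t) (w s) * w) := by
  classical
  set q := Equiv.swap (w t) (w s) * w with hq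
  have hwts : w t ≠ w s := ne_of_lt h
  have qt : q t = w s := by
    rw [hq, Equiv.Perm.mul_apply, Equiv.swap_apply_left]
  have qs : q s = w t := by
    rw [hq, Equiv.Perm.mul_apply, Equiv.swap_apply_right]
  have qother : ∀ x : Fin n, x ≠ t → x ≠ s → q x = w x := by
    intro x hxt hxs
    rw [hq, Equiv.Perm.mul_apply, Equiv.swap_apply_of_ne_of_ne
      (fun hh => hxt (w.injective hh)) (fun hh => hxs (w.injective hh))]
  set φ : Fin n × Fin n → Fin n × Fin n := fun p =>
    if (Equiv.swap t s p.1) < (Equiv.swap t s p.2)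
    then (Equiv.swap t s p.1, Equiv.swap t s p.2) else p with hφ
  have hts_ne : t ≠ s := ne_of_lt hts
  have hins : (t, s) ∉ invSet w := by
    simp only [invSet, mem_filter, mem_univ, true_and, not_and]
    intro _
    exact asymm h
  have hmaps : ∀ p ∈ insert (t, s) (invSet w), φ p ∈ invSet (q) := by
    rintro ⟨i, j⟩ hp
    rcases Finset.mem_insert.mp hp with heq | hmem
    · -- p = (t,s)
      have hi : i = t := (Prod.mk.injEq _ _ _ _ ▸ heq).1
      have hj : j = s := (Prod.mk.injEq _ _ _ _ ▸ heq).2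
      subst hi; subst hj
      have : φ (i, j) = (i, j) := by
        rw [hφ]
        simp only [Equiv.swap_apply_left, Equiv.swap_apply_right]
        rw [if_neg (asymm hts)]
      rw [this]
      simp only [invSet, mem_filter, mem_univ, true_and]
      exact ⟨hts, by rw [qt, qs]; exact h⟩
    · simp only [invSet, mem_filter, mem_univ, true_and] at hmem
      obtain ⟨hij, hinv⟩ := hmem
      simp only [invSet, mem_filter, mem_univ, true_and, hφ]
      by_cases hit : i = t
      · by_cases hjs : j = s
        · rw [hit, hjs] at hinv
          exact absurd hinv (asymm h)
        · rw [hit] at hij hinv ⊢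
          have hjt : j ≠ t := ne_of_gt hij
          rw [Equiv.swap_apply_left, Equiv.swap_apply_of_ne_of_ne hjt hjs]
          by_cases hsj : s < j
          · rw [if_pos hsj]
            refine ⟨hsj, ?_⟩
            rw [qs, qother j hjt hjs]
            exact hinv
          · rw [if_neg hsj]
            refine ⟨hij, ?_⟩
            rw [qt, qother j hjt hjs]
            exact lt_trans hinv h
      · by_cases his : i = s
        · rw [his] at hij hinv ⊢
          have hjt : j ≠ t := by
            rintro rfl; exact absurd hij (asymm hts)
          have hjs : j ≠ s := ne_of_gt hij
          rw [Equiv.swap_apply_right, Equiv.swap_apply_of_ne_of_ne hjt hjs]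
          rw [if_pos (lt_trans hts hij)]
          refine ⟨lt_trans hts hij, ?_⟩
          rw [qt, qother j hjt hjs]
          exact hinv
        · by_cases hjt : j = t
          · rw [hjt] at hij hinv ⊢
            rw [Equiv.swap_apply_of_ne_of_ne hit his, Equiv.swap_apply_left]
            rw [if_pos (lt_trans hij hts)]
            refine ⟨lt_trans hij hts, ?_⟩
            rw [qs, qother i hit his]
            exact hinv
          · by_cases hjs : j = s
            · rw [hjs] at hij hinv ⊢
              rw [Equiv.swap_apply_of_ne_of_ne hit his, Equiv.swap_apply_right]
              by_cases hit2 : i < t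
              · rw [if_pos hit2]
                refine ⟨hit2, ?_⟩
                rw [qt, qother i hit his]
                exact hinv
              · rw [if_neg hit2]
                refine ⟨hij, ?_⟩
                rw [qs, qother i hit his]
                exact lt_trans h hinv
            · rw [Equiv.swap_apply_of_ne_of_ne hit his,
                Equiv.swap_apply_of_ne_of_ne hjt hjs, if_pos hij]
              refine ⟨hij, ?_⟩
              rw [qother i hit his, qother j hjt hjs]
              exact hinv
  have hinj : Set.InjOn φ (insert (t, s) (invSet w) : Finset (Fin n × Fin n)) := by
    have hφφ : ∀ p : Fin n × Fin n, p.1 < p.2 → φ (φ p) = p := by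
      rintro ⟨i, j⟩ hij
      by_cases hlt : (Equiv.swap t s i) < (Equiv.swap t s j)
      · rw [hφ]
        simp only
        rw [if_pos hlt]
        simp only [Equiv.swap_apply_self]
        rw [if_pos hij]
      · rw [hφ]
        simp only
        rw [if_neg hlt, if_neg hlt]
    intro p hp p' hp' hpp
    have h1 : p.1 < p.2 := by
      rcases Finset.mem_insert.mp (by exact_mod_cast hp) with heq | hmem
      · rw [heq]; exact hts
      · exact (Finset.mem_filter.mp hmem).2.1
    have h2 : p'.1 < p'.2 := by
      rcases Finset.mem_insert.mp (by exact_mod_cast hp') with heq | hmem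
      · rw [heq]; exact hts
      · exact (Finset.mem_filter.mp hmem).2.1
    rw [← hφφ p h1, hpp, hφφ p' h2]
  have hcard := Finset.card_le_card_of_injOn φ hmaps hinj
  rw [Finset.card_insert_of_notMem hins] at hcard
  rw [numInv_eq_card_invSet, numInv_eq_card_invSet]
  omega

end UX
namespace UX
open Finset Equiv

variable {n : ℕ}

section disj

variable {D : WDperm n} {a c : Fin (2*n)}

lemma isWD_disjU (hD : IsWD D) : IsWD (disjU D a c) := isWD_conj hD _ _

lemma disjU_apply_a (hX : IsCrossing D a c) : disjU D a c a = c := by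
  obtain ⟨h1, h2, h3⟩ := hX
  have hab : a ≠ D a := ne_of_lt (lt_trans h1 h2)
  have hac : a ≠ c := ne_of_lt h1
  simp [disjU, Equiv.Perm.mul_apply, Equiv.swap_apply_of_ne_of_ne hab hac]

lemma disjU_apply_b (hD : IsWD D) (hX : IsCrossing D a c) : disjU D a c (D a) = D c := by
  obtain ⟨h1, h2, h3⟩ := hX
  have hd1 : D c ≠ D a := fun h => absurd (D.injective h) (ne_of_lt h1).symm
  have hd2 : D c ≠ c := fun h => absurd (h ▸ lt_trans h2 h3) (lt_irrefl _)
  simp [disjU, Equiv.Perm.mul_apply, hD.1, Equiv.swap_apply_of_ne_of_ne hd1 hd2]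

lemma disjU_apply_c (hD : IsWD D) (hX : IsCrossing D a c) : disjU D a c c = a := by
  obtain ⟨h1, h2, h3⟩ := hX
  have hab : a ≠ D a := ne_of_lt (lt_trans h1 h2)
  have hac : a ≠ c := ne_of_lt h1
  simp [disjU, Equiv.Perm.mul_apply, hD.1, Equiv.swap_apply_of_ne_of_ne hab hac]

lemma disjU_apply_d (hD : IsWD D) (hX : IsCrossing D a c) : disjU D a c (D c) = D a := by
  obtain ⟨h1, h2, h3⟩ := hX
  have hd1 : D c ≠ D a := fun h => absurd (D.injective h) (ne_of_lt h1).symm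
  have hd2 : D c ≠ c := fun h => absurd (h ▸ lt_trans h2 h3) (lt_irrefl _)
  simp [disjU, Equiv.Perm.mul_apply, hD.1, Equiv.swap_apply_of_ne_of_ne hd1 hd2]

lemma disjU_apply_other (hD : IsWD D) {x : Fin (2*n)} (hxa : x ≠ a) (hxc : x ≠ c)
    (hxb : x ≠ D a) (hxd : x ≠ D c) : disjU D a c x = D x := by
  have h1 : D x ≠ D a := fun h => hxa (D.injective h)
  have h2 : D x ≠ c := by
    intro h
    apply hxd
    rw [← hD.1 x, h]
  simp [disjU, Equiv.Perm.mul_apply, Equiv.swap_apply_of_ne_of_ne hxb hxc,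
    Equiv.swap_apply_of_ne_of_ne h1 h2]

lemma startSet_disjU (hD : IsWD D) (hX : IsCrossing D a c) :
    startSet (disjU D a c) = insert (D a) ((startSet D).erase c) := by
  obtain ⟨h1, h2, h3⟩ := hX
  have hac : a < c := h1
  have hcb : c < D a := h2
  have hbd : D a < D c := h3
  ext x
  rw [mem_startSet, Finset.mem_insert, Finset.mem_erase, mem_startSet]
  by_cases hxa : x = a
  · rw [hxa, disjU_apply_a ⟨h1, h2, h3⟩]
    constructor
    · intro _
      right
      exact ⟨ne_of_lt hac, lt_trans hac hcb⟩
    · intro _; exact hac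
  by_cases hxc : x = c
  · rw [hxc, disjU_apply_c hD ⟨h1, h2, h3⟩]
    constructor
    · intro h; exact absurd h (asymm hac)
    · rintro (h | h)
      · exact absurd h (ne_of_lt hcb)
      · exact absurd rfl h.1
  by_cases hxb : x = D a
  · rw [hxb, disjU_apply_b hD ⟨h1, h2, h3⟩]
    constructor
    · intro _; left; rfl
    · intro _; exact hbd
  by_cases hxd : x = D c
  · rw [hxd, disjU_apply_d hD ⟨h1, h2, h3⟩]
    constructor
    · intro h; exact absurd h (asymm hbd)
    · rintro (h | h)
      · exact absurd h.symm (ne_of_lt hbd)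
      · rw [hD.1] at h
        exact absurd h.2 (asymm (lt_trans hcb hbd))
  · rw [disjU_apply_other hD hxa hxc hxb hxd]
    constructor
    · intro h
      right
      exact ⟨hxc, h⟩
    · rintro (h | h)
      · exact absurd h hxb
      · exact h.2

end disj

/-- Sum of positions of first endpoints. -/
def msum (D : WDperm n) : ℕ := ∑ x ∈ startSet D, (x : ℕ)

lemma msum_nestU {D : WDperm n} {a c : Fin (2*n)} (hD : IsWD D) (hX : IsCrossing D a c) :
    msum (nestU D a c) = msum D := by
  unfold msum
  rw [startSet_nestU hD hX]

lemma msum_disjU {D : WDperm n} {a c : Fin (2*n)} (hD : IsWD D) (hX : IsCrossing D a c) :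
    msum D < msum (disjU D a c) := by
  have hcS : c ∈ startSet D := c_mem_start hX
  have hbS : (D a : Fin (2*n)) ∉ startSet D := by
    rw [mem_startSet, hD.1]
    exact not_lt.mpr (le_of_lt (lt_trans hX.1 hX.2.1))
  have hbe : (D a : Fin (2*n)) ∉ (startSet D).erase c :=
    fun h => hbS (Finset.mem_of_mem_erase h)
  have e1 : msum (disjU D a c) = (D a : ℕ) + ∑ x ∈ (startSet D).erase c, (x : ℕ) := by
    unfold msum
    rw [startSet_disjU hD hX, Finset.sum_insert hbe]
  have e2 : msum D = (c : ℕ) + ∑ x ∈ (startSet D).erase c, (x : ℕ) := by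
    unfold msum
    rw [Finset.add_sum_erase _ _ hcS]
  have : (c : ℕ) < (D a : ℕ) := hX.2.1
  omega

lemma startSet_disjU_ne {D : WDperm n} {a c : Fin (2*n)} (hD : IsWD D)
    (hX : IsCrossing D a c) : startSet (disjU D a c) ≠ startSet D := by
  intro h
  have := msum_disjU hD hX
  unfold msum at this
  rw [h] at this
  exact absurd this (lt_irrefl _)

/-- A cover step preserving the start set. -/
def CovN (x y : {σ : WDperm n // IsWD σ}) : Prop :=
  UncCov x.1 y.1 ∧ startSet x.1 = startSet y.1

lemma uncCov_msum {D E : WDperm n} (hD : IsWD D) (h : UncCov D E) :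
    msum D ≤ msum E ∧ (msum D = msum E → startSet D = startSet E) := by
  obtain ⟨hstep, hcnt⟩ := h
  rcases hstep with ⟨a, c, hX, rfl⟩ | ⟨a, c, hX, rfl⟩
  · rw [msum_nestU hD hX]
    exact ⟨le_refl _, fun _ => (startSet_nestU hD hX).symm⟩
  · have := msum_disjU hD hX
    exact ⟨le_of_lt this, fun h => absurd h (by omega)⟩

lemma uncCov_isWD {D E : WDperm n} (hD : IsWD D) (h : UncCov D E) : IsWD E := by
  obtain ⟨hstep, _⟩ := h
  rcases hstep with ⟨a, c, _, rfl⟩ | ⟨a, c, _, rfl⟩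
  · exact isWD_nestU hD
  · exact isWD_disjU hD

end UX
namespace UX
open Finset Equiv

variable {n : ℕ}

/-- The sorted enumeration of first endpoints. -/
def aE (D : WDperm n) (hD : IsWD D) (t : Fin n) : Fin (2*n) :=
  enum (startSet D) (card_startSet hD) t

lemma aE_piPerm (D : WDperm n) (hD : IsWD D) (t : Fin n) :
    aE D hD (piPerm D t) = D (bE D hD t) := enum_piPerm D hD t

lemma aE_eq_of_startSet {D D' : WDperm n} (hD : IsWD D) (hD' : IsWD D')
    (h : startSet D = startSet D') (t : Fin n) : aE D hD t = aE D' hD' t :=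
  enum_eq_of_eq h t

lemma aE_lt_aE {D : WDperm n} {hD : IsWD D} {t s : Fin n} :
    aE D hD t < aE D hD s ↔ t < s := enum_lt_enum

lemma bE_lt_bE {D : WDperm n} {hD : IsWD D} {t s : Fin n} :
    bE D hD t < bE D hD s ↔ t < s := enum_lt_enum

/-- Feasibility of `p` w.r.t. the start set of `D`. -/
def Feas (D : WDperm n) (hD : IsWD D) (p : Equiv.Perm (Fin n)) : Prop :=
  ∀ t : Fin n, aE D hD (p t) < bE D hD t

lemma feas_congr {D D' : WDperm n} (hD : IsWD D) (hD' : IsWD D')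
    (h : startSet D = startSet D') (p : Equiv.Perm (Fin n)) :
    Feas D hD p ↔ Feas D' hD' p := by
  unfold Feas
  constructor <;> intro hf t
  · rw [← aE_eq_of_startSet hD hD' h, ← bE_eq_of_startSet hD hD' h]
    exact hf t
  · rw [aE_eq_of_startSet hD hD' h, bE_eq_of_startSet hD hD' h]
    exact hf t

lemma feas_self (D : WDperm n) (hD : IsWD D) : Feas D hD (piPerm D) := fun t => by
  rw [aE_piPerm]; exact bE_mem D hD t

lemma bruhatStep_struct {u v : Equiv.Perm (Fin n)} (h : BruhatStep u v) :
    ∃ t s : Fin n, t < s ∧ u t < u s ∧ v = Equiv.swap (u t) (u s) * u := by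
  obtain ⟨⟨x, y, hne, hveq⟩, hinv⟩ := h
  have main : ∀ x y : Fin n, x < y → v = Equiv.swap x y * u →
      ∃ t s : Fin n, t < s ∧ u t < u s ∧ v = Equiv.swap (u t) (u s) * u := by
    intro x y hxy hveq
    set t0 := u.symm x with ht0
    set s0 := u.symm y with hs0
    have hut : u t0 = x := u.apply_symm_apply x
    have hus : u s0 = y := u.apply_symm_apply y
    have hts_ne : t0 ≠ s0 := fun hh => (ne_of_lt hxy) (by rw [← hut, ← hus, hh])
    rcases lt_or_gt_of_ne hts_ne with hlt | hgt
    · exact ⟨t0, s0, hlt, by rw [hut, hus]; exact hxy, by rw [hut, hus]; exact hveq⟩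
    · exfalso
      have hvs : v s0 = x := by
        rw [hveq, Equiv.Perm.mul_apply, hus, Equiv.swap_apply_right]
      have hvt : v t0 = y := by
        rw [hveq, Equiv.Perm.mul_apply, hut, Equiv.swap_apply_left]
      have hge := numInv_swap_ge hgt (by rw [hvs, hvt]; exact hxy)
      have hkey : Equiv.swap (v s0) (v t0) * v = u := by
        rw [hvs, hvt, hveq, ← mul_assoc, Equiv.swap_mul_self, one_mul]
      rw [hkey] at hge
      omega
  rcases lt_or_gt_of_ne hne with hxy | hxy
  · exact main x y hxy hveq
  · exact main y x hxy (by rwa [Equiv.swap_comm])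

lemma bruhat_step_lift {D : WDperm n} (hD : IsWD D) {q : Equiv.Perm (Fin n)}
    (hstep : BruhatStep (piPerm D) q) (hfeas : Feas D hD q) :
    ∃ E : WDperm n, IsWD E ∧ UncCov D E ∧ startSet E = startSet D ∧ piPerm E = q := by
  obtain ⟨t0, s0, hts, hval, hq⟩ := bruhatStep_struct hstep
  have hinv : numInv q = numInv (piPerm D) + 1 := hstep.2
  set π := piPerm D with hπ
  set aK := aE D hD (π t0) with haK
  set aM := aE D hD (π s0) with haM
  have hDaK : D aK = bE D hD t0 := by
    rw [haK, aE_piPerm, hD.1]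
  have hDaM : D aM = bE D hD s0 := by
    rw [haM, aE_piPerm, hD.1]
  have hqt0 : q t0 = π s0 := by
    rw [hq, Equiv.Perm.mul_apply, Equiv.swap_apply_left]
  have hX : IsCrossing D aK aM := by
    refine ⟨aE_lt_aE.mpr hval, ?_, ?_⟩
    · rw [hDaK]
      have := hfeas t0
      rwa [hqt0] at this
    · rw [hDaK, hDaM]
      exact bE_lt_bE.mpr hts
  have hkF : (⟨rank (startSet D) aK, rank_a_lt hD hX⟩ : Fin n) = π t0 := by
    apply Fin.ext
    simp only
    rw [haK, aE]
    exact rank_enum _ _ _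
  have hmF : (⟨rank (startSet D) aM, rank_c_lt hD hX⟩ : Fin n) = π s0 := by
    apply Fin.ext
    simp only
    rw [haM, aE]
    exact rank_enum _ _ _
  have hπE : piPerm (nestU D aK aM) = q := by
    rw [piPerm_nestU hD hX, hkF, hmF, hq]
  have h5 := numInv_add_ncross_nestU hD hX
  rw [hπE, ← hπ] at h5
  refine ⟨nestU D aK aM, isWD_nestU hD, ⟨Or.inl ⟨aK, aM, hX, rfl⟩, by omega⟩,
    startSet_nestU hD hX, hπE⟩

lemma feas_step_down {D : WDperm n} (hD : IsWD D) {u v : Equiv.Perm (Fin n)}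
    (hstep : BruhatStep u v) (hv : Feas D hD v) : Feas D hD u := by
  obtain ⟨t0, s0, hts, hval, hveq⟩ := bruhatStep_struct hstep
  have hvt0 : v t0 = u s0 := by
    rw [hveq, Equiv.Perm.mul_apply, Equiv.swap_apply_left]
  have hvs0 : v s0 = u t0 := by
    rw [hveq, Equiv.Perm.mul_apply, Equiv.swap_apply_right]
  intro t
  by_cases h1 : t = t0
  · rw [h1]
    calc aE D hD (u t0) < aE D hD (u s0) := aE_lt_aE.mpr hval
    _ < bE D hD t0 := by rw [← hvt0]; exact hv t0
  by_cases h2 : t = s0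
  · rw [h2]
    calc aE D hD (u s0) < bE D hD t0 := by rw [← hvt0]; exact hv t0
    _ < bE D hD s0 := bE_lt_bE.mpr hts
  · have hvt : v t = u t := by
      rw [hveq, Equiv.Perm.mul_apply, Equiv.swap_apply_of_ne_of_ne
        (fun hh => h1 (u.injective hh)) (fun hh => h2 (u.injective hh))]
    rw [← hvt]
    exact hv t

lemma feas_of_bruhatLE {D : WDperm n} (hD : IsWD D) {p v : Equiv.Perm (Fin n)}
    (h : BruhatLE p v) (hv : Feas D hD v) : Feas D hD p := by
  induction h using Relation.ReflTransGen.head_induction_on with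
  | refl => exact hv
  | head hstep _ ih => exact feas_step_down hD hstep ih

lemma ple_some_some {x y : {σ : WDperm n // IsWD σ}} (h : ple (some x) (some y)) :
    Relation.ReflTransGen (fun u v : {σ : WDperm n // IsWD σ} => UncCov u.1 v.1) x y := by
  have key : ∀ b : PStar n, ple (some x) b →
      ∀ z : {σ : WDperm n // IsWD σ}, b = some z →
      Relation.ReflTransGen (fun u v : {σ : WDperm n // IsWD σ} => UncCov u.1 v.1) x z := by
    intro b hb
    induction hb with
    | refl =>
      rintro z hz
      cases hz
      exact Relation.ReflTransGen.refl
    | tail hmid hcov ih =>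
      rintro z rfl
      rename_i mid
      match mid, hcov with
      | some w, hcov =>
        exact Relation.ReflTransGen.tail (ih w rfl) hcov
  exact key _ h y rfl

lemma rtg_covS_msum {x y : {σ : WDperm n // IsWD σ}}
    (h : Relation.ReflTransGen (fun u v : {σ : WDperm n // IsWD σ} => UncCov u.1 v.1) x y) :
    msum x.1 ≤ msum y.1 ∧ (msum x.1 = msum y.1 →
      Relation.ReflTransGen CovN x y ∧ startSet x.1 = startSet y.1) := by
  induction h with
  | refl => exact ⟨le_refl _, fun _ => ⟨Relation.ReflTransGen.refl, rfl⟩⟩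
  | tail hxz hcov ih =>
    rename_i z w
    obtain ⟨hle1, hrest⟩ := ih
    obtain ⟨hle2, heq2⟩ := uncCov_msum z.2 hcov
    refine ⟨le_trans hle1 hle2, fun heq => ?_⟩
    have h1 : msum x.1 = msum z.1 := by omega
    have hss := heq2 (by omega)
    obtain ⟨hrtg, hstart⟩ := hrest h1
    exact ⟨hrtg.tail ⟨hcov, hss⟩, hstart.trans hss⟩

lemma covN_bruhat {x y : {σ : WDperm n // IsWD σ}} (h : CovN x y) :
    BruhatStep (piPerm x.1) (piPerm y.1) := by
  obtain ⟨⟨hstep, hcnt⟩, hss⟩ := h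
  rcases hstep with ⟨a, c, hX, hy⟩ | ⟨a, c, hX, hy⟩
  · have hkm : (⟨rank (startSet x.1) a, rank_a_lt x.2 hX⟩ : Fin n) ≠
        ⟨rank (startSet x.1) c, rank_c_lt x.2 hX⟩ := by
      intro hh
      have := rank_inj (a_mem_start hX) (c_mem_start hX) (congrArg Fin.val hh)
      exact absurd this (ne_of_lt hX.1)
    have hπ : piPerm y.1 = Equiv.swap (⟨rank (startSet x.1) a, rank_a_lt x.2 hX⟩ : Fin n)
        ⟨rank (startSet x.1) c, rank_c_lt x.2 hX⟩ * piPerm x.1 := by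
      rw [hy]; exact piPerm_nestU x.2 hX
    refine ⟨⟨_, _, hkm, hπ⟩, ?_⟩
    have h5 := numInv_add_ncross_nestU x.2 hX
    rw [← hy] at h5
    rw [hy] at hcnt
    rw [← hy] at hcnt
    omega
  · exfalso
    apply startSet_disjU_ne x.2 hX
    rw [← hy, ← hss]

lemma rtg_covN_bruhatLE {x y : {σ : WDperm n // IsWD σ}}
    (h : Relation.ReflTransGen CovN x y) : BruhatLE (piPerm x.1) (piPerm y.1) := by
  induction h with
  | refl => exact Relation.ReflTransGen.refl
  | tail _ hcov ih => exact ih.tail (covN_bruhat hcov)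

lemma rtg_covN_ple {x y : {σ : WDperm n // IsWD σ}}
    (h : Relation.ReflTransGen CovN x y) : ple (some x) (some y) := by
  induction h with
  | refl => exact Relation.ReflTransGen.refl
  | tail _ hcov ih => exact ih.tail hcov.1

lemma rtg_covN_start {x y : {σ : WDperm n // IsWD σ}}
    (h : Relation.ReflTransGen CovN x y) : startSet x.1 = startSet y.1 := by
  induction h with
  | refl => rfl
  | tail _ hcov ih => exact ih.trans hcov.2

lemma sIdxT_congr {D D' : WDperm n} (hD : IsWD D) (hD' : IsWD D')
    (hss : startSet D = startSet D') (z : Fin (2*n)) : sIdxT D z = sIdxT D' z := by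
  apply Fin.ext
  unfold sIdxT
  simp only
  rw [secondEnds_eq_of_startSet hD hD' hss]

lemma piPerm_injective {D D' : WDperm n} (hD : IsWD D) (hD' : IsWD D')
    (hss : startSet D = startSet D') (hpp : piPerm D = piPerm D') : D = D' := by
  have hsec : ∀ x, D x < x → D x = D' x := by
    intro x hx
    have hxm : x ∈ secondEnds D := mem_secondEnds.mpr hx
    have hxm' : x ∈ secondEnds D' := by
      rwa [← secondEnds_eq_of_startSet hD hD' hss]
    have hbt : bE D hD (sIdxT D x) = x := bE_sIdxT hD hxm
    have hbt' : bE D' hD' (sIdxT D x) = x := by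
      rw [sIdxT_congr hD hD' hss]
      exact bE_sIdxT hD' hxm'
    have e1 : D x = aE D hD (piPerm D (sIdxT D x)) := by rw [aE_piPerm, hbt]
    have e2 : D' x = aE D' hD' (piPerm D' (sIdxT D x)) := by rw [aE_piPerm, hbt']
    rw [e1, e2, ← hpp, aE_eq_of_startSet hD hD' hss]
  apply Equiv.ext
  intro x
  rcases (hD.2 x).lt_or_gt with hx | hx
  · -- D x < x : second endpoint
    exact hsec x hx
  · -- x < D x : first endpoint
    have h1 : D (D x) < D x := by rw [hD.1]; exact hx
    have h2 : D (D x) = D' (D x) := hsec (D x) h1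
    rw [hD.1] at h2
    have := congrArg D' h2
    rw [hD'.1] at this
    exact this.symm

end UX
namespace UX
open Finset Equiv

variable {n : ℕ}

lemma bruhat_chain_lift (D : {σ : WDperm n // IsWD σ}) {p : Equiv.Perm (Fin n)}
    (h : BruhatLE (piPerm D.1) p) (hfeas : Feas D.1 D.2 p) :
    ∃ E : {σ : WDperm n // IsWD σ}, Relation.ReflTransGen CovN D E ∧ piPerm E.1 = p ∧
      startSet E.1 = startSet D.1 := by
  revert hfeas
  induction h with
  | refl =>
    intro _
    exact ⟨D, Relation.ReflTransGen.refl, rfl, rfl⟩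
  | tail hmid hstep ih =>
    rename_i mid q
    intro hfeas
    obtain ⟨E, hrtg, hπE, hssE⟩ := ih (feas_step_down D.2 hstep hfeas)
    have hstepE : BruhatStep (piPerm E.1) q := by rw [hπE]; exact hstep
    have hfeasE : Feas E.1 E.2 q := by
      rw [feas_congr E.2 D.2 hssE]; exact hfeas
    obtain ⟨F, hF, hcov, hssF, hπF⟩ := bruhat_step_lift E.2 hstepE hfeasE
    exact ⟨⟨F, hF⟩, hrtg.tail ⟨hcov, hssF.symm⟩, hπF, hssF.trans hssE⟩

end UX

open UX in
theorem interval_iso_bruhat' (n : ℕ) (hn : 2 ≤ n) (σ τ : {σ : WDperm n // IsWD σ})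
    (hle : ple (some σ) (some τ)) (hS : startSet σ.1 = startSet τ.1) :
    (∀ D : {σ : WDperm n // IsWD σ}, ple (some σ) (some D) → ple (some D) (some τ) →
        BruhatLE (piPerm σ.1) (piPerm D.1) ∧ BruhatLE (piPerm D.1) (piPerm τ.1)) ∧
    (∀ D D' : {σ : WDperm n // IsWD σ},
        ple (some σ) (some D) → ple (some D) (some τ) →
        ple (some σ) (some D') → ple (some D') (some τ) →
        ((ple (some D) (some D') ↔ BruhatLE (piPerm D.1) (piPerm D'.1)) ∧
          (piPerm D.1 = piPerm D'.1 → D = D'))) ∧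
    (∀ p : Equiv.Perm (Fin n), BruhatLE (piPerm σ.1) p → BruhatLE p (piPerm τ.1) →
        ∃ D : {σ : WDperm n // IsWD σ}, ple (some σ) (some D) ∧ ple (some D) (some τ) ∧
          piPerm D.1 = p) := by
  classical
  have hmsumστ : msum σ.1 = msum τ.1 := by
    unfold msum; rw [hS]
  have main : ∀ D : {σ : WDperm n // IsWD σ}, ple (some σ) (some D) → ple (some D) (some τ) →
      Relation.ReflTransGen CovN σ D ∧ Relation.ReflTransGen CovN D τ ∧
      startSet D.1 = startSet σ.1 := by
    intro D h1 h2
    have c1 := ple_some_some h1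
    have c2 := ple_some_some h2
    obtain ⟨m1, r1⟩ := rtg_covS_msum c1
    obtain ⟨m2, r2⟩ := rtg_covS_msum c2
    have e1 : msum σ.1 = msum D.1 := by omega
    have e2 : msum D.1 = msum τ.1 := by omega
    obtain ⟨rr1, ss1⟩ := r1 e1
    obtain ⟨rr2, _⟩ := r2 e2
    exact ⟨rr1, rr2, ss1.symm⟩
  refine ⟨?_, ?_, ?_⟩
  · intro D h1 h2
    obtain ⟨rr1, rr2, _⟩ := main D h1 h2
    exact ⟨rtg_covN_bruhatLE rr1, rtg_covN_bruhatLE rr2⟩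
  · intro D D' h1 h2 h3 h4
    obtain ⟨rr1, rr2, hsD⟩ := main D h1 h2
    obtain ⟨rr1', rr2', hsD'⟩ := main D' h3 h4
    have hDD' : startSet D.1 = startSet D'.1 := hsD.trans hsD'.symm
    refine ⟨⟨?_, ?_⟩, ?_⟩
    · intro hDle
      have c := ple_some_some hDle
      obtain ⟨m, r⟩ := rtg_covS_msum c
      have hmm : msum D.1 = msum D'.1 := by
        unfold msum; rw [hDD']
      obtain ⟨rr, _⟩ := r hmm
      exact rtg_covN_bruhatLE rr
    · intro hB
      have hfeas : Feas D.1 D.2 (piPerm D'.1) := by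
        rw [feas_congr D.2 D'.2 hDD']
        exact feas_self D'.1 D'.2
      obtain ⟨E, hrtg, hπE, hssE⟩ := bruhat_chain_lift D hB hfeas
      have hED' : E = D' := by
        apply Subtype.ext
        apply piPerm_injective E.2 D'.2 _ hπE
        exact hssE.trans hDD'
      rw [← hED']
      exact rtg_covN_ple hrtg
    · intro hpp
      exact Subtype.ext (piPerm_injective D.2 D'.2 hDD' hpp)
  · intro p hp1 hp2
    have hfeas_p : Feas σ.1 σ.2 p := by
      apply feas_of_bruhatLE σ.2 hp2
      rw [feas_congr σ.2 τ.2 hS]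
      exact feas_self τ.1 τ.2
    obtain ⟨E, hrtg, hπE, hssE⟩ := bruhat_chain_lift σ hp1 hfeas_p
    refine ⟨E, rtg_covN_ple hrtg, ?_, hπE⟩
    have hp2E : BruhatLE (piPerm E.1) (piPerm τ.1) := by rw [hπE]; exact hp2
    have hfeas2 : Feas E.1 E.2 (piPerm τ.1) := by
      rw [feas_congr E.2 τ.2 (hssE.trans hS)]
      exact feas_self τ.1 τ.2
    obtain ⟨F, hrtgF, hπF, hssF⟩ := bruhat_chain_lift E hp2E hfeas2
    have hFτ : F = τ := by
      apply Subtype.ext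
      apply piPerm_injective F.2 τ.2 _ hπF
      exact (hssF.trans (hssE.trans hS))
    rw [← hFτ]
    exact rtg_covN_ple hrtgF

/-- If `σ ≤ τ` in `P_n^*` with `S(σ) = S(τ)`, then `D ↦ π(D)` is an order isomorphism from the
interval `[σ, τ]` of `P_n^*` onto the interval `[π(σ), π(τ)]` of the Bruhat order on `S_n`:
it maps into the Bruhat interval, it is order preserving and reflecting, injective, and
surjective onto the Bruhat interval. -/
theorem interval_iso_bruhat (n : ℕ) (hn : 2 ≤ n) (σ τ : {σ : WDperm n // IsWD σ})
    (hle : ple (some σ) (some τ)) (hS : startSet σ.1 = startSet τ.1) :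
    (∀ D : {σ : WDperm n // IsWD σ}, ple (some σ) (some D) → ple (some D) (some τ) →
        BruhatLE (piPerm σ.1) (piPerm D.1) ∧ BruhatLE (piPerm D.1) (piPerm τ.1)) ∧
    (∀ D D' : {σ : WDperm n // IsWD σ},
        ple (some σ) (some D) → ple (some D) (some τ) →
        ple (some σ) (some D') → ple (some D') (some τ) →
        ((ple (some D) (some D') ↔ BruhatLE (piPerm D.1) (piPerm D'.1)) ∧
          (piPerm D.1 = piPerm D'.1 → D = D'))) ∧
    (∀ p : Equiv.Perm (Fin n), BruhatLE (piPerm σ.1) p → BruhatLE p (piPerm τ.1) →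
        ∃ D : {σ : WDperm n // IsWD σ}, ple (some σ) (some D) ∧ ple (some D) (some τ) ∧
          piPerm D.1 = p) :=
  interval_iso_bruhat' n hn σ τ hle hS
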